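/- Each piece in a convex geometry is a piece of a unique element: if P is a piece of x and also a piece of x', then x = x'. -/

import Mathlib

open Set

variable {X Y Z : Type*}

/-- A choice function: `f A ⊆ A` for all `A`. -/
def IsChoice (f : Set X → Set X) : Prop := ∀ A, f A ⊆ A

/-- A Plott function: choice function satisfying path independence. -/
def IsPlott (f : Set X → Set X) : Prop :=
  IsChoice f ∧ ∀ A B : Set X, f (A ∪ B) = f (f A ∪ B)

/-- Closure in a family of sets: intersection of all members containing `A`. -/
def closureOf (𝓕 : Set (Set X)) (A : Set X) : Set X := ⋂₀ {F | F ∈ 𝓕 ∧ A ⊆ F}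

/-- Extreme points of `A` with respect to the closure system `𝓕`. -/
def extPts (𝓕 : Set (Set X)) (A : Set X) : Set X :=
  {a ∈ A | a ∉ closureOf 𝓕 (A \ {a})}

/-- Convex geometry: contains `univ`, closed under intersection, MKM property. -/
def IsConvexGeometry (𝓕 : Set (Set X)) : Prop :=
  Set.univ ∈ 𝓕 ∧ (∀ F ∈ 𝓕, ∀ G ∈ 𝓕, F ∩ G ∈ 𝓕) ∧
    ∀ A : Set X, closureOf 𝓕 A = closureOf 𝓕 (extPts 𝓕 A)

/-- `P` is a piece of `x`: a closed set not containing `x` such that every closed set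
strictly containing `P` contains `x`. -/
def IsPiece (𝓕 : Set (Set X)) (P : Set X) (x : X) : Prop :=
  P ∈ 𝓕 ∧ x ∉ P ∧ ∀ Q ∈ 𝓕, P ⊂ Q → x ∈ Q

lemma subset_closureOf (𝓕 : Set (Set X)) (A : Set X) : A ⊆ closureOf 𝓕 A :=
  fun a ha F hF => hF.2 ha

lemma closureOf_mono (𝓕 : Set (Set X)) {A B : Set X} (h : A ⊆ B) :
    closureOf 𝓕 A ⊆ closureOf 𝓕 B :=
  fun a ha F hF => ha F ⟨hF.1, h.trans hF.2⟩

lemma closureOf_subset_of_mem (𝓕 : Set (Set X)) {A F : Set X} (hF : F ∈ 𝓕) (h : A ⊆ F) :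
    closureOf 𝓕 A ⊆ F :=
  sInter_subset_of_mem ⟨hF, h⟩

lemma sInter_mem_of_finite {𝓕 : Set (Set X)} (huniv : Set.univ ∈ 𝓕)
    (hint : ∀ F ∈ 𝓕, ∀ G ∈ 𝓕, F ∩ G ∈ 𝓕) {T : Set (Set X)} (hT : T.Finite)
    (hsub : T ⊆ 𝓕) : ⋂₀ T ∈ 𝓕 := by
  refine Set.Finite.induction_on (motive := fun T _ => T ⊆ 𝓕 → ⋂₀ T ∈ 𝓕) T hT
    (fun _ => by simpa using huniv) (fun {F T} _ _ ih hsub => ?_) hsub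
  rw [sInter_insert]
  exact hint _ (hsub (mem_insert _ _)) _ (ih fun G hG => hsub (mem_insert_of_mem _ hG))

lemma closureOf_mem {X : Type*} [Fintype X] {𝓕 : Set (Set X)} (huniv : Set.univ ∈ 𝓕)
    (hint : ∀ F ∈ 𝓕, ∀ G ∈ 𝓕, F ∩ G ∈ 𝓕) (A : Set X) : closureOf 𝓕 A ∈ 𝓕 :=
  sInter_mem_of_finite huniv hint (Set.toFinite _) (fun _ hF => hF.1)

/-- a piece is a piece of a unique element. -/
theorem piece_unique_element {X : Type*} [Fintype X]
    (𝓕 : Set (Set X)) (h𝓕 : IsConvexGeometry 𝓕)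
    (P : Set X) (x x' : X) (hx : IsPiece 𝓕 P x) (hx' : IsPiece 𝓕 P x') :
    x = x' := by
  obtain ⟨huniv, hint, hmkm⟩ := h𝓕
  by_contra hne
  set A : Set X := P ∪ {x, x'} with hA
  -- x ∈ closure of P ∪ {x'}
  have key : ∀ y z : X, IsPiece 𝓕 P y → z ∉ P → y ≠ z → y ∈ closureOf 𝓕 (P ∪ {z}) := by
    intro y z hy hz hyz
    refine hy.2.2 _ (closureOf_mem huniv hint _) ⟨subset_union_left.trans (subset_closureOf _ _), ?_⟩
    intro hsub
    exact hz (hsub (subset_closureOf 𝓕 _ (mem_union_right _ rfl)))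
  have hAx : A \ {x} = P ∪ {x'} := by
    ext a
    simp only [hA, mem_diff, mem_union, mem_insert_iff, mem_singleton_iff]
    constructor
    · rintro ⟨(h | h | h), h2⟩ <;> tauto
    · rintro (h | h)
      · exact ⟨Or.inl h, fun he => hx.2.1 (he ▸ h)⟩
      · exact ⟨Or.inr (Or.inr h), fun he => hne (he.symm ▸ h ▸ rfl)⟩
  have hAx' : A \ {x'} = P ∪ {x} := by
    ext a
    simp only [hA, mem_diff, mem_union, mem_insert_iff, mem_singleton_iff]
    constructor
    · rintro ⟨(h | h | h), h2⟩ <;> tauto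
    · rintro (h | h)
      · exact ⟨Or.inl h, fun he => hx'.2.1 (he ▸ h)⟩
      · exact ⟨Or.inr (Or.inl h), fun he => hne (h ▸ he ▸ rfl)⟩
  have hxne : x ∉ extPts 𝓕 A := by
    intro hmem
    exact hmem.2 (hAx ▸ key x x' hx hx'.2.1 hne)
  have hx'ne : x' ∉ extPts 𝓕 A := by
    intro hmem
    exact hmem.2 (hAx' ▸ key x' x hx' hx.2.1 (Ne.symm hne))
  have hext : extPts 𝓕 A ⊆ P := by
    intro a ha
    rcases ha.1 with h | h | h
    · exact h
    · exact absurd (h ▸ ha) hxne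
    · exact absurd (h ▸ ha) hx'ne
  have : closureOf 𝓕 A ⊆ P := by
    rw [hmkm A]
    exact closureOf_subset_of_mem 𝓕 hx.1 hext
  exact hx.2.1 (this (subset_closureOf 𝓕 A (mem_union_right _ (Or.inl rfl))))
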